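/- Let d ≥ 2 and suppose for all k ≥ 0 that a_k ≤ c 2^{-k(d-1)} (2^{-kγ}|s| + 2^{-k}|ξ|)^{-(d-1)/2} with γ > 2 and ξ ≠ 0, s ≠ 0. Then Σ_{k=0}^∞ a_k ≤ C |ξ|^{-(d-1)(γ-2)/(2(γ-1))} |s|^{-(d-1)/(2(γ-1))}. -/

import Mathlib

open Real

set_option maxHeartbeats 1000000 in
/-- Dyadic summation: if `a_k ≤ c 2^{-k(d-1)} (2^{-kγ}|s| + 2^{-k}|ξ|)^{-(d-1)/2}` with `γ > 2`,
then `∑ a_k ≤ C |ξ|^{-(d-1)(γ-2)/(2(γ-1))} |s|^{-(d-1)/(2(γ-1))}`. -/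
theorem stmt_10 (d : ℕ) (hd : 2 ≤ d) (γ c : ℝ) (hγ : 2 < γ) (hc : 0 ≤ c) :
    ∃ C : ℝ, ∀ s ξ : ℝ, s ≠ 0 → ξ ≠ 0 → ∀ a : ℕ → ℝ, (∀ k, 0 ≤ a k) →
      (∀ k, a k ≤ c * (2 : ℝ) ^ (-(k : ℝ) * ((d : ℝ) - 1)) *
        ((2 : ℝ) ^ (-(k : ℝ) * γ) * |s| + (2 : ℝ) ^ (-(k : ℝ)) * |ξ|) ^ (-((d : ℝ) - 1) / 2)) →
      ∑' k, a k ≤ C * |ξ| ^ (-((d : ℝ) - 1) * (γ - 2) / (2 * (γ - 1))) *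
        |s| ^ (-((d : ℝ) - 1) / (2 * (γ - 1))) := by
  have hd1 : (1:ℝ) ≤ (d:ℝ) - 1 := by
    have : (2:ℝ) ≤ (d:ℝ) := by exact_mod_cast hd
    linarith
  set e : ℝ := ((d:ℝ) - 1) / 2 with he
  have hde : (d:ℝ) - 1 = 2 * e := by rw [he]; ring
  have he0 : 0 < e := by rw [he]; linarith
  have hγ1 : (0:ℝ) < γ - 1 := by linarith
  have hγ0 : γ - 1 ≠ 0 := ne_of_gt hγ1
  have hγ2 : (0:ℝ) < γ - 2 := by linarith
  set q : ℝ := (2:ℝ) ^ (-e) with hq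
  set r : ℝ := (2:ℝ) ^ ((γ - 2) * e) with hr
  have hq0 : 0 < q := Real.rpow_pos_of_pos two_pos _
  have hq1 : q < 1 := Real.rpow_lt_one_of_one_lt_of_neg one_lt_two (by linarith)
  have hr1 : 1 < r := (Real.one_lt_rpow_iff_of_pos two_pos).mpr (Or.inl ⟨one_lt_two, by positivity⟩)
  rw [hq] at hq0 hq1
  rw [hr] at hr1
  clear_value e q r
  rw [← hq] at hq0 hq1
  rw [← hr] at hr1
  refine ⟨c * (r / (r - 1) + (1 - q)⁻¹), ?_⟩
  intro s ξ hs hξ a ha hbound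
  have hsp : 0 < |s| := abs_pos.mpr hs
  have hξp : 0 < |ξ| := abs_pos.mpr hξ
  set E1 : ℝ := -((d:ℝ) - 1) * (γ - 2) / (2 * (γ - 1)) with hE1
  set E2 : ℝ := -((d:ℝ) - 1) / (2 * (γ - 1)) with hE2
  have hE1' : E1 = -((γ - 2) * e / (γ - 1)) := by
    rw [hE1, he]; field_simp
  have hE2' : E2 = -(e / (γ - 1)) := by
    rw [hE2, he]; field_simp
  set T : ℝ := |ξ| ^ E1 * |s| ^ E2 with hT
  have hTpos : 0 < T := by
    rw [hT]; exact mul_pos (Real.rpow_pos_of_pos hξp _) (Real.rpow_pos_of_pos hsp _)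
  clear_value E1 E2 T
  -- per-k bounds
  have hB : ∀ k : ℕ, a k ≤ c * |ξ| ^ (-e) * q ^ k := by
    intro k
    have hX : (0:ℝ) < (2:ℝ) ^ (-(k:ℝ) * γ) * |s| + (2:ℝ) ^ (-(k:ℝ)) * |ξ| := by positivity
    have h1 : ((2:ℝ) ^ (-(k:ℝ) * γ) * |s| + (2:ℝ) ^ (-(k:ℝ)) * |ξ|) ^ (-((d:ℝ) - 1) / 2)
        ≤ ((2:ℝ) ^ (-(k:ℝ)) * |ξ|) ^ (-((d:ℝ) - 1) / 2) :=
      Real.rpow_le_rpow_of_nonpos (by positivity) (by nlinarith [Real.rpow_pos_of_pos two_pos (-(k:ℝ) * γ)])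
        (by rw [neg_div]; rw [← he]; linarith)
    have h2 : ((2:ℝ) ^ (-(k:ℝ)) * |ξ|) ^ (-((d:ℝ) - 1) / 2)
        = (2:ℝ) ^ ((k:ℝ) * e) * |ξ| ^ (-e) := by
      rw [Real.mul_rpow (by positivity) (abs_nonneg ξ), ← Real.rpow_mul (by norm_num)]
      have hexp : -((d:ℝ) - 1) / 2 = -e := by rw [he]; ring
      rw [hexp]
      congr 1
      ring
    have h3 : c * (2:ℝ) ^ (-(k:ℝ) * ((d:ℝ) - 1)) * ((2:ℝ) ^ ((k:ℝ) * e) * |ξ| ^ (-e))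
        = c * |ξ| ^ (-e) * q ^ k := by
      have hqk : q ^ k = (2:ℝ) ^ (-(e * (k:ℝ))) := by
        rw [hq, ← Real.rpow_natCast ((2:ℝ) ^ (-e)) k, ← Real.rpow_mul (by norm_num)]
        ring_nf
      have h4 : (2:ℝ) ^ (-(k:ℝ) * ((d:ℝ) - 1)) * (2:ℝ) ^ ((k:ℝ) * e)
          = (2:ℝ) ^ (-(e * (k:ℝ))) := by
        rw [← Real.rpow_add two_pos]
        congr 1
        rw [hde]; ring
      rw [hqk, ← h4]; ring
    calc a k ≤ c * (2:ℝ) ^ (-(k:ℝ) * ((d:ℝ) - 1)) *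
          ((2:ℝ) ^ (-(k:ℝ) * γ) * |s| + (2:ℝ) ^ (-(k:ℝ)) * |ξ|) ^ (-((d:ℝ) - 1) / 2) := hbound k
      _ ≤ c * (2:ℝ) ^ (-(k:ℝ) * ((d:ℝ) - 1)) * ((2:ℝ) ^ (-(k:ℝ)) * |ξ|) ^ (-((d:ℝ) - 1) / 2) :=
          mul_le_mul_of_nonneg_left h1 (by positivity)
      _ = c * |ξ| ^ (-e) * q ^ k := by rw [h2, h3]
  have hA : ∀ k : ℕ, a k ≤ c * |s| ^ (-e) * r ^ k := by
    intro k
    have h1 : ((2:ℝ) ^ (-(k:ℝ) * γ) * |s| + (2:ℝ) ^ (-(k:ℝ)) * |ξ|) ^ (-((d:ℝ) - 1) / 2)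
        ≤ ((2:ℝ) ^ (-(k:ℝ) * γ) * |s|) ^ (-((d:ℝ) - 1) / 2) :=
      Real.rpow_le_rpow_of_nonpos (by positivity) (by nlinarith [Real.rpow_pos_of_pos two_pos (-(k:ℝ))])
        (by rw [neg_div]; rw [← he]; linarith)
    have h2 : ((2:ℝ) ^ (-(k:ℝ) * γ) * |s|) ^ (-((d:ℝ) - 1) / 2)
        = (2:ℝ) ^ ((k:ℝ) * γ * e) * |s| ^ (-e) := by
      rw [Real.mul_rpow (by positivity) (abs_nonneg s), ← Real.rpow_mul (by norm_num)]
      have hexp : -((d:ℝ) - 1) / 2 = -e := by rw [he]; ring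
      rw [hexp]
      congr 1
      ring
    have h3 : c * (2:ℝ) ^ (-(k:ℝ) * ((d:ℝ) - 1)) * ((2:ℝ) ^ ((k:ℝ) * γ * e) * |s| ^ (-e))
        = c * |s| ^ (-e) * r ^ k := by
      have hrk : r ^ k = (2:ℝ) ^ ((γ - 2) * e * (k:ℝ)) := by
        rw [hr, ← Real.rpow_natCast ((2:ℝ) ^ ((γ - 2) * e)) k, ← Real.rpow_mul (by norm_num)]
      have h4 : (2:ℝ) ^ (-(k:ℝ) * ((d:ℝ) - 1)) * (2:ℝ) ^ ((k:ℝ) * γ * e)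
          = (2:ℝ) ^ ((γ - 2) * e * (k:ℝ)) := by
        rw [← Real.rpow_add two_pos]
        congr 1
        rw [hde]; ring
      rw [hrk, ← h4]; ring
    calc a k ≤ c * (2:ℝ) ^ (-(k:ℝ) * ((d:ℝ) - 1)) *
          ((2:ℝ) ^ (-(k:ℝ) * γ) * |s| + (2:ℝ) ^ (-(k:ℝ)) * |ξ|) ^ (-((d:ℝ) - 1) / 2) := hbound k
      _ ≤ c * (2:ℝ) ^ (-(k:ℝ) * ((d:ℝ) - 1)) * ((2:ℝ) ^ (-(k:ℝ) * γ) * |s|) ^ (-((d:ℝ) - 1) / 2) :=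
          mul_le_mul_of_nonneg_left h1 (by positivity)
      _ = c * |s| ^ (-e) * r ^ k := by rw [h2, h3]
  -- summability
  have hsum_q : Summable (fun k : ℕ => c * |ξ| ^ (-e) * q ^ k) :=
    (summable_geometric_of_lt_one hq0.le hq1).mul_left _
  have hsa : Summable a := Summable.of_nonneg_of_le ha hB hsum_q
  have htsum_q : ∑' k : ℕ, c * |ξ| ^ (-e) * q ^ k = c * |ξ| ^ (-e) * (1 - q)⁻¹ := by
    rw [tsum_mul_left, tsum_geometric_of_lt_one hq0.le hq1]
  rcases le_or_gt |s| |ξ| with hcase | hcase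
  · -- |s| ≤ |ξ| : use only the decaying bound
    have hξT : |ξ| ^ (-e) ≤ T := by
      have hsplit : |ξ| ^ (-e) = |ξ| ^ E1 * |ξ| ^ E2 := by
        rw [← Real.rpow_add hξp]
        congr 1
        rw [hE1', hE2']; field_simp; ring
      have hle : |ξ| ^ E2 ≤ |s| ^ E2 :=
        Real.rpow_le_rpow_of_nonpos hsp hcase (by rw [hE2']; exact neg_nonpos.mpr (div_nonneg he0.le hγ1.le))
      rw [hsplit, hT]
      exact mul_le_mul_of_nonneg_left hle (Real.rpow_nonneg (abs_nonneg ξ) _)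
    calc ∑' k, a k ≤ ∑' k : ℕ, c * |ξ| ^ (-e) * q ^ k := Summable.tsum_le_tsum hB hsa hsum_q
      _ = c * |ξ| ^ (-e) * (1 - q)⁻¹ := htsum_q
      _ ≤ c * T * (1 - q)⁻¹ := by
          have h1 : (0:ℝ) ≤ (1 - q)⁻¹ := inv_nonneg.mpr (by linarith)
          exact mul_le_mul_of_nonneg_right (mul_le_mul_of_nonneg_left hξT hc) h1
      _ ≤ c * T * (r / (r - 1) + (1 - q)⁻¹) := by
          have h2 : (0:ℝ) < r / (r - 1) := div_pos (by linarith) (by linarith)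
          have : (1 - q)⁻¹ ≤ r / (r - 1) + (1 - q)⁻¹ := by linarith
          exact mul_le_mul_of_nonneg_left this (mul_nonneg hc hTpos.le)
      _ = c * (r / (r - 1) + (1 - q)⁻¹) * |ξ| ^ E1 * |s| ^ E2 := by rw [hT]; ring
  · -- |ξ| < |s| : dyadic split
    set u : ℝ := Real.logb 2 (|s| / |ξ|) / (γ - 1) with hu
    have hds1 : (1:ℝ) ≤ |s| / |ξ| := by
      rw [le_div_iff₀ hξp]; linarith
    have hu0 : 0 ≤ u :=
      div_nonneg (Real.logb_nonneg one_lt_two hds1) hγ1.le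
    obtain ⟨K, hKu, hKu1⟩ : ∃ K : ℕ, u ≤ (K:ℝ) ∧ (K:ℝ) ≤ u + 1 :=
      ⟨⌈u⌉₊, Nat.le_ceil u, (Nat.ceil_lt_add_one hu0).le⟩
    clear_value u
    have h2w : ∀ w : ℝ, (2:ℝ) ^ (Real.logb 2 (|s| / |ξ|) * w) = (|s| / |ξ|) ^ w := by
      intro w
      rw [Real.rpow_mul (by norm_num), Real.rpow_logb two_pos (by norm_num) (by positivity)]
    have hdiv : ∀ w : ℝ, (|s| / |ξ|) ^ w = |s| ^ w * |ξ| ^ (-w) := by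
      intro w
      rw [Real.div_rpow (abs_nonneg s) (abs_nonneg ξ), Real.rpow_neg (abs_nonneg ξ),
        div_eq_mul_inv]
    set w : ℝ := (γ - 2) * e / (γ - 1) with hw
    clear_value w
    have hrK : r ^ K ≤ r * (|s| / |ξ|) ^ w := by
      have h1 : r ^ K = (2:ℝ) ^ ((γ - 2) * e * (K:ℝ)) := by
        rw [hr, ← Real.rpow_natCast ((2:ℝ) ^ ((γ - 2) * e)) K, ← Real.rpow_mul (by norm_num)]
      rw [h1]
      calc (2:ℝ) ^ ((γ - 2) * e * (K:ℝ)) ≤ (2:ℝ) ^ ((γ - 2) * e * (u + 1)) := by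
            apply Real.rpow_le_rpow_of_exponent_le one_le_two
            have : (0:ℝ) ≤ (γ - 2) * e := by positivity
            nlinarith
        _ = r * (|s| / |ξ|) ^ w := by
            have hexp : (γ - 2) * e * (u + 1) = (γ - 2) * e + Real.logb 2 (|s| / |ξ|) * w := by
              rw [hu, hw]; ring
            rw [hexp, Real.rpow_add two_pos, h2w, hr]
    have hqK : q ^ K ≤ (|s| / |ξ|) ^ (-(e / (γ - 1))) := by
      have h1 : q ^ K = (2:ℝ) ^ (-e * (K:ℝ)) := by
        rw [hq, ← Real.rpow_natCast ((2:ℝ) ^ (-e)) K, ← Real.rpow_mul (by norm_num)]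
      rw [h1]
      calc (2:ℝ) ^ (-e * (K:ℝ)) ≤ (2:ℝ) ^ (-e * u) := by
            apply Real.rpow_le_rpow_of_exponent_le one_le_two
            nlinarith
        _ = (|s| / |ξ|) ^ (-(e / (γ - 1))) := by
            have hexp : -e * u = Real.logb 2 (|s| / |ξ|) * (-(e / (γ - 1))) := by
              rw [hu]; ring
            rw [hexp, h2w]
    have hAr : c * |s| ^ (-e) * (r * (|s| / |ξ|) ^ w) = c * r * T := by
      have h1 : |s| ^ (-e) * |s| ^ w = |s| ^ E2 := by
        rw [← Real.rpow_add hsp]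
        congr 1
        rw [hE2', hw]; field_simp; ring
      have h2 : |ξ| ^ (-w) = |ξ| ^ E1 := by rw [hE1', hw]
      rw [hdiv, hT, ← h1, ← h2]; ring
    have hBq : c * |ξ| ^ (-e) * (|s| / |ξ|) ^ (-(e / (γ - 1))) = c * T := by
      have h1 : |ξ| ^ (-e) * |ξ| ^ (-(-(e / (γ - 1)))) = |ξ| ^ E1 := by
        rw [← Real.rpow_add hξp]
        congr 1
        rw [hE1', hw]; field_simp; ring
      have h2 : |s| ^ (-(e / (γ - 1))) = |s| ^ E2 := by rw [hE2']
      rw [hdiv, hT, ← h1, ← h2]; ring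
    have hsplit := (Summable.sum_add_tsum_nat_add K hsa :
      ∑ i ∈ Finset.range K, a i + ∑' i, a (i + K) = ∑' i, a i)
    rw [← hsplit]
    have hfirst : ∑ i ∈ Finset.range K, a i ≤ c * (r / (r - 1)) * T := by
      have hr1' : r - 1 > 0 := by linarith
      calc ∑ i ∈ Finset.range K, a i ≤ ∑ i ∈ Finset.range K, c * |s| ^ (-e) * r ^ i :=
            Finset.sum_le_sum fun i _ => hA i
        _ = c * |s| ^ (-e) * ∑ i ∈ Finset.range K, r ^ i := by rw [Finset.mul_sum]
        _ = c * |s| ^ (-e) * ((r ^ K - 1) / (r - 1)) := by rw [geom_sum_eq (ne_of_gt hr1)]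
        _ ≤ c * |s| ^ (-e) * (r ^ K / (r - 1)) := by
            gcongr
            linarith
        _ ≤ c * |s| ^ (-e) * ((r * (|s| / |ξ|) ^ w) / (r - 1)) := by gcongr
        _ = (c * |s| ^ (-e) * (r * (|s| / |ξ|) ^ w)) / (r - 1) := by ring
        _ = (c * r * T) / (r - 1) := by rw [hAr]
        _ = c * (r / (r - 1)) * T := by ring
    have htail : ∑' i, a (i + K) ≤ c * (1 - q)⁻¹ * T := by
      have hsum2 : Summable (fun i : ℕ => c * |ξ| ^ (-e) * q ^ K * q ^ i) :=
        (summable_geometric_of_lt_one hq0.le hq1).mul_left _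
      calc ∑' i, a (i + K) ≤ ∑' i : ℕ, c * |ξ| ^ (-e) * q ^ K * q ^ i := by
            apply Summable.tsum_le_tsum (f := fun i => a (i + K))
              (g := fun i : ℕ => c * |ξ| ^ (-e) * q ^ K * q ^ i) _
              ((summable_nat_add_iff K).mpr hsa) hsum2
            intro i
            calc a (i + K) ≤ c * |ξ| ^ (-e) * q ^ (i + K) := hB (i + K)
              _ = c * |ξ| ^ (-e) * q ^ K * q ^ i := by rw [pow_add]; ring
        _ = c * |ξ| ^ (-e) * q ^ K * (1 - q)⁻¹ := by
            rw [tsum_mul_left, tsum_geometric_of_lt_one hq0.le hq1]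
        _ ≤ c * |ξ| ^ (-e) * (|s| / |ξ|) ^ (-(e / (γ - 1))) * (1 - q)⁻¹ := by
            have : (0:ℝ) < 1 - q := by linarith
            gcongr
        _ = c * T * (1 - q)⁻¹ := by rw [hBq]
        _ = c * (1 - q)⁻¹ * T := by ring
    calc ∑ i ∈ Finset.range K, a i + ∑' i, a (i + K)
        ≤ c * (r / (r - 1)) * T + c * (1 - q)⁻¹ * T := add_le_add hfirst htail
      _ = c * (r / (r - 1) + (1 - q)⁻¹) * |ξ| ^ E1 * |s| ^ E2 := by rw [hT]; ring
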